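/- Let (R,V,W,S) be a Morita context with VW = R and WV = S. If R is a prime ring or S is a prime ring, then the Morita context ring T is a prime ring. -/

import Mathlib

/-- A Morita context `(R,V,W,S)`: rings `R`, `S`, an `(R,S)`-bimodule `V`,
an `(S,R)`-bimodule `W`, and context products `V × W → R`, `W × V → S`
making the `2 × 2` matrix set an associative ring. -/
structure MoritaContext (R S V W : Type*) [Ring R] [Ring S]
    [AddCommGroup V] [AddCommGroup W] : Type _ where
  smulRV : R → V → V
  smulVS : V → S → V
  smulSW : S → W → W
  smulWR : W → R → W
  mulVW : V → W → R
  mulWV : W → V → S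
  smulRV_add : ∀ r v v', smulRV r (v + v') = smulRV r v + smulRV r v'
  add_smulRV : ∀ r r' v, smulRV (r + r') v = smulRV r v + smulRV r' v
  mul_smulRV : ∀ r r' v, smulRV (r * r') v = smulRV r (smulRV r' v)
  one_smulRV : ∀ v, smulRV 1 v = v
  smulVS_add : ∀ v v' s, smulVS (v + v') s = smulVS v s + smulVS v' s
  add_smulVS : ∀ v s s', smulVS v (s + s') = smulVS v s + smulVS v s'
  mul_smulVS : ∀ v s s', smulVS v (s * s') = smulVS (smulVS v s) s'
  one_smulVS : ∀ v, smulVS v 1 = v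
  smul_assocRVS : ∀ r v s, smulVS (smulRV r v) s = smulRV r (smulVS v s)
  smulSW_add : ∀ s w w', smulSW s (w + w') = smulSW s w + smulSW s w'
  add_smulSW : ∀ s s' w, smulSW (s + s') w = smulSW s w + smulSW s' w
  mul_smulSW : ∀ s s' w, smulSW (s * s') w = smulSW s (smulSW s' w)
  one_smulSW : ∀ w, smulSW 1 w = w
  smulWR_add : ∀ w w' r, smulWR (w + w') r = smulWR w r + smulWR w' r
  add_smulWR : ∀ w r r', smulWR w (r + r') = smulWR w r + smulWR w r'
  mul_smulWR : ∀ w r r', smulWR w (r * r') = smulWR (smulWR w r) r'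
  one_smulWR : ∀ w, smulWR w 1 = w
  smul_assocSWR : ∀ s w r, smulWR (smulSW s w) r = smulSW s (smulWR w r)
  mulVW_add_left : ∀ v v' w, mulVW (v + v') w = mulVW v w + mulVW v' w
  mulVW_add_right : ∀ v w w', mulVW v (w + w') = mulVW v w + mulVW v w'
  mulWV_add_left : ∀ w w' v, mulWV (w + w') v = mulWV w v + mulWV w' v
  mulWV_add_right : ∀ w v v', mulWV w (v + v') = mulWV w v + mulWV w v'
  mulVW_smulR : ∀ r v w, mulVW (smulRV r v) w = r * mulVW v w
  mulVW_smulS : ∀ v s w, mulVW (smulVS v s) w = mulVW v (smulSW s w)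
  mulVW_smulWR : ∀ v w r, mulVW v (smulWR w r) = mulVW v w * r
  mulWV_smulS : ∀ s w v, mulWV (smulSW s w) v = s * mulWV w v
  mulWV_smulR : ∀ w r v, mulWV (smulWR w r) v = mulWV w (smulRV r v)
  mulWV_smulVS : ∀ w v s, mulWV w (smulVS v s) = mulWV w v * s
  assocVWV : ∀ v w v', smulRV (mulVW v w) v' = smulVS v (mulWV w v')
  assocWVW : ∀ w v w', smulSW (mulWV w v) w' = smulWR w (mulVW v w')

namespace MoritaContext

variable {R S V W : Type*} [Ring R] [Ring S] [AddCommGroup V] [AddCommGroup W]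
variable (M : MoritaContext R S V W)

/-- The underlying set of the Morita context ring: matrices `((r,v),(w,s))`. -/
def Mat (_ : MoritaContext R S V W) : Type _ := (R × V) × (W × S)

instance : AddCommGroup M.Mat := inferInstanceAs (AddCommGroup ((R × V) × (W × S)))


@[simp] lemma add_fst_fst (a b : M.Mat) : (a + b).1.1 = a.1.1 + b.1.1 := rfl
@[simp] lemma add_fst_snd (a b : M.Mat) : (a + b).1.2 = a.1.2 + b.1.2 := rfl
@[simp] lemma add_snd_fst (a b : M.Mat) : (a + b).2.1 = a.2.1 + b.2.1 := rfl
@[simp] lemma add_snd_snd (a b : M.Mat) : (a + b).2.2 = a.2.2 + b.2.2 := rfl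
@[simp] lemma neg_fst_fst (a : M.Mat) : (-a).1.1 = -a.1.1 := rfl
@[simp] lemma neg_fst_snd (a : M.Mat) : (-a).1.2 = -a.1.2 := rfl
@[simp] lemma neg_snd_fst (a : M.Mat) : (-a).2.1 = -a.2.1 := rfl
@[simp] lemma neg_snd_snd (a : M.Mat) : (-a).2.2 = -a.2.2 := rfl
@[simp] lemma zero_fst_fst : (0 : M.Mat).1.1 = 0 := rfl
@[simp] lemma zero_fst_snd : (0 : M.Mat).1.2 = 0 := rfl
@[simp] lemma zero_snd_fst : (0 : M.Mat).2.1 = 0 := rfl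
@[simp] lemma zero_snd_snd : (0 : M.Mat).2.2 = 0 := rfl

/-- The matrix `((r,v),(w,s))` as an element of the Morita context ring. -/
def mat (r : R) (v : V) (w : W) (s : S) : M.Mat := ((r, v), (w, s))

lemma smulRV_zero (r : R) : M.smulRV r 0 = 0 := by
  have h := M.smulRV_add r 0 0
  rw [add_zero] at h
  exact (add_eq_left.mp h.symm)

lemma zero_smulRV (v : V) : M.smulRV 0 v = 0 := by
  have h := M.add_smulRV 0 0 v
  rw [add_zero] at h
  exact (add_eq_left.mp h.symm)

lemma smulVS_zero (v : V) : M.smulVS v 0 = 0 := by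
  have h := M.add_smulVS v 0 0
  rw [add_zero] at h
  exact (add_eq_left.mp h.symm)

lemma zero_smulVS (s : S) : M.smulVS 0 s = 0 := by
  have h := M.smulVS_add 0 0 s
  rw [add_zero] at h
  exact (add_eq_left.mp h.symm)

lemma smulSW_zero (s : S) : M.smulSW s 0 = 0 := by
  have h := M.smulSW_add s 0 0
  rw [add_zero] at h
  exact (add_eq_left.mp h.symm)

lemma zero_smulSW (w : W) : M.smulSW 0 w = 0 := by
  have h := M.add_smulSW 0 0 w
  rw [add_zero] at h
  exact (add_eq_left.mp h.symm)

lemma smulWR_zero (w : W) : M.smulWR w 0 = 0 := by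
  have h := M.add_smulWR w 0 0
  rw [add_zero] at h
  exact (add_eq_left.mp h.symm)

lemma zero_smulWR (r : R) : M.smulWR 0 r = 0 := by
  have h := M.smulWR_add 0 0 r
  rw [add_zero] at h
  exact (add_eq_left.mp h.symm)

lemma mulVW_zero (v : V) : M.mulVW v 0 = 0 := by
  have h := M.mulVW_add_right v 0 0
  rw [add_zero] at h
  exact (add_eq_left.mp h.symm)

lemma zero_mulVW (w : W) : M.mulVW 0 w = 0 := by
  have h := M.mulVW_add_left 0 0 w
  rw [add_zero] at h
  exact (add_eq_left.mp h.symm)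

lemma mulWV_zero (w : W) : M.mulWV w 0 = 0 := by
  have h := M.mulWV_add_right w 0 0
  rw [add_zero] at h
  exact (add_eq_left.mp h.symm)

lemma zero_mulWV (v : V) : M.mulWV 0 v = 0 := by
  have h := M.mulWV_add_left 0 0 v
  rw [add_zero] at h
  exact (add_eq_left.mp h.symm)


lemma mat_ext {a b : M.Mat} (h1 : a.1.1 = b.1.1) (h2 : a.1.2 = b.1.2)
    (h3 : a.2.1 = b.2.1) (h4 : a.2.2 = b.2.2) : a = b :=
  Prod.ext (Prod.ext h1 h2) (Prod.ext h3 h4)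

/-- Multiplication in the Morita context ring. -/
def matMul (a b : M.Mat) : M.Mat :=
  ((a.1.1 * b.1.1 + M.mulVW a.1.2 b.2.1, M.smulRV a.1.1 b.1.2 + M.smulVS a.1.2 b.2.2),
   (M.smulWR a.2.1 b.1.1 + M.smulSW a.2.2 b.2.1, M.mulWV a.2.1 b.1.2 + a.2.2 * b.2.2))

/-- The ring structure on the Morita context matrices. -/
instance : Ring M.Mat where
  __ := (inferInstanceAs (AddCommGroup ((R × V) × (W × S))) : AddCommGroup ((R × V) × (W × S)))
  mul := M.matMul
  one := ((1, 0), (0, 1))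
  left_distrib a b c := by
    show M.matMul a (b + c) = M.matMul a b + M.matMul a c
    refine M.mat_ext ?_ ?_ ?_ ?_ <;>
      simp [matMul, M.smulRV_add, M.add_smulVS, M.smulSW_add, M.add_smulWR,
        M.mulVW_add_right, M.mulWV_add_right, mul_add] <;> (try change _ = _ + _) <;> (try dsimp only) <;> abel
  right_distrib a b c := by
    show M.matMul (a + b) c = M.matMul a c + M.matMul b c
    refine M.mat_ext ?_ ?_ ?_ ?_ <;>
      simp [matMul, M.add_smulRV, M.smulVS_add, M.add_smulSW, M.smulWR_add,
        M.mulVW_add_left, M.mulWV_add_left, add_mul] <;> (try change _ = _ + _) <;> (try dsimp only) <;> abel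
  zero_mul a := by
    show M.matMul 0 a = 0
    simp [matMul, M.zero_smulRV, M.zero_smulVS, M.zero_smulSW, M.zero_smulWR,
      M.zero_mulVW, M.zero_mulWV] <;> rfl
  mul_zero a := by
    show M.matMul a 0 = 0
    simp [matMul, M.smulRV_zero, M.smulVS_zero, M.smulSW_zero, M.smulWR_zero,
      M.mulVW_zero, M.mulWV_zero] <;> rfl
  mul_assoc a b c := by
    show M.matMul (M.matMul a b) c = M.matMul a (M.matMul b c)
    refine M.mat_ext ?_ ?_ ?_ ?_ <;>
      simp [matMul, M.smulRV_add, M.add_smulRV, M.mul_smulRV, M.smulVS_add, M.add_smulVS,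
        M.mul_smulVS, M.smul_assocRVS, M.smulSW_add, M.add_smulSW, M.mul_smulSW,
        M.smulWR_add, M.add_smulWR, M.mul_smulWR, M.smul_assocSWR,
        M.mulVW_add_left, M.mulVW_add_right, M.mulWV_add_left, M.mulWV_add_right,
        M.mulVW_smulR, M.mulVW_smulS, M.mulVW_smulWR, M.mulWV_smulS, M.mulWV_smulR,
        M.mulWV_smulVS, M.assocVWV, M.assocWVW, mul_add, add_mul, mul_assoc] <;> (try change _ = _ + _) <;> (try dsimp only) <;> abel
  one_mul a := by
    show M.matMul ((1, 0), (0, 1)) a = a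
    simp [matMul, M.one_smulRV, M.one_smulSW, M.zero_smulVS, M.zero_smulWR,
      M.zero_mulVW, M.zero_mulWV] <;> rfl
  mul_one a := by
    show M.matMul a ((1, 0), (0, 1)) = a
    simp [matMul, M.one_smulVS, M.one_smulWR, M.smulRV_zero, M.smulSW_zero,
      M.mulVW_zero, M.mulWV_zero] <;> rfl

/-- The "rectangular" subset `(I, V₁, W₁, J)` of the Morita context ring. -/
def rect (I : Set R) (V₁ : Set V) (W₁ : Set W) (J : Set S) : Set M.Mat :=
  {t | t.1.1 ∈ I ∧ t.1.2 ∈ V₁ ∧ t.2.1 ∈ W₁ ∧ t.2.2 ∈ J}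

end MoritaContext

/-- A subset of a ring is a right ideal. -/
def IsRightIdealSet {A : Type*} [Ring A] (U : Set A) : Prop :=
  (0 : A) ∈ U ∧ (∀ a ∈ U, ∀ b ∈ U, a + b ∈ U) ∧ (∀ a ∈ U, -a ∈ U) ∧
    ∀ a ∈ U, ∀ t : A, a * t ∈ U

/-- A subset of a ring is a two-sided ideal. -/
def IsIdealSet {A : Type*} [Ring A] (U : Set A) : Prop :=
  (0 : A) ∈ U ∧ (∀ a ∈ U, ∀ b ∈ U, a + b ∈ U) ∧ (∀ a ∈ U, -a ∈ U) ∧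
    (∀ a ∈ U, ∀ t : A, a * t ∈ U) ∧ ∀ a ∈ U, ∀ t : A, t * a ∈ U

/-- A proper two-sided ideal `U` is prime if `aAb ⊆ U` implies `a ∈ U` or `b ∈ U`. -/
def IsPrimeIdealSet {A : Type*} [Ring A] (U : Set A) : Prop :=
  IsIdealSet U ∧ U ≠ Set.univ ∧ ∀ a b : A, (∀ x : A, a * x * b ∈ U) → a ∈ U ∨ b ∈ U

/-- A proper two-sided ideal `U` is semiprime if `aAa ⊆ U` implies `a ∈ U`. -/
def IsSemiprimeIdealSet {A : Type*} [Ring A] (U : Set A) : Prop :=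
  IsIdealSet U ∧ U ≠ Set.univ ∧ ∀ a : A, (∀ x : A, a * x * a ∈ U) → a ∈ U

/-- A proper right ideal `U` is prime if `aAb ⊆ U` implies `a ∈ U` or `b ∈ U`. -/
def IsPrimeRightIdealSet {A : Type*} [Ring A] (U : Set A) : Prop :=
  IsRightIdealSet U ∧ U ≠ Set.univ ∧ ∀ a b : A, (∀ x : A, a * x * b ∈ U) → a ∈ U ∨ b ∈ U

/-- The prime radical of a ring: the intersection of all its prime ideals. -/
def primeRadicalSet (A : Type*) [Ring A] : Set A := ⋂₀ {U | IsPrimeIdealSet U}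

/-- A ring `A` is prime if `aAb = 0` implies `a = 0` or `b = 0`. -/
def IsPrimeRing (A : Type*) [Ring A] : Prop :=
  ∀ a b : A, (∀ x : A, a * x * b = 0) → a = 0 ∨ b = 0

/-- A ring `A` is semiprime if `aAa = 0` implies `a = 0`. -/
def IsSemiprimeRing (A : Type*) [Ring A] : Prop :=
  ∀ a : A, (∀ x : A, a * x * a = 0) → a = 0

/-- The Morita context `(A,A,A,A)` over a commutative ring with all products
given by multiplication in `A`. -/
def MoritaContext.ofComm (A : Type*) [CommRing A] : MoritaContext A A A A := by
  refine ⟨(· * ·), (· * ·), (· * ·), (· * ·), (· * ·), (· * ·), ?_, ?_, ?_, ?_, ?_, ?_, ?_, ?_, ?_, ?_, ?_, ?_, ?_, ?_, ?_, ?_, ?_, ?_, ?_, ?_, ?_, ?_, ?_, ?_, ?_, ?_, ?_, ?_, ?_, ?_⟩ <;>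
    intros <;> ring

/-- The Morita context `(A, I, J, A)` over a commutative ring `A` with ideals
`I`, `J`, all products given by multiplication in `A`. -/
def MoritaContext.ofIdeals (A : Type*) [CommRing A] (I J : Ideal A) :
    MoritaContext A A I J := by
  refine ⟨fun r v => ⟨r * v.1, I.mul_mem_left r v.2⟩,
    fun v s => ⟨v.1 * s, I.mul_mem_right s v.2⟩,
    fun s w => ⟨s * w.1, J.mul_mem_left s w.2⟩,
    fun w r => ⟨w.1 * r, J.mul_mem_right r w.2⟩,
    fun v w => v.1 * w.1, fun w v => w.1 * v.1, ?_, ?_, ?_, ?_, ?_, ?_, ?_, ?_, ?_, ?_, ?_, ?_, ?_, ?_, ?_, ?_, ?_, ?_, ?_, ?_, ?_, ?_, ?_, ?_, ?_, ?_, ?_, ?_, ?_, ?_⟩ <;>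
    intros <;> first
      | (apply Subtype.ext; push_cast; ring)
      | (push_cast; ring)

variable {R S V W : Type*} [Ring R] [Ring S] [AddCommGroup V] [AddCommGroup W]

section Stmt17Aux

variable {M : MoritaContext R S V W}

private lemma stmt17_mat11 (r : R) (v : V) (w : W) (s : S) :
    (M.mat r v w s).1.1 = r := rfl
private lemma stmt17_mat12 (r : R) (v : V) (w : W) (s : S) :
    (M.mat r v w s).1.2 = v := rfl
private lemma stmt17_mat21 (r : R) (v : V) (w : W) (s : S) :
    (M.mat r v w s).2.1 = w := rfl
private lemma stmt17_mat22 (r : R) (v : V) (w : W) (s : S) :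
    (M.mat r v w s).2.2 = s := rfl

private lemma stmt17_one : (1 : M.Mat) = M.mat 1 0 0 1 := rfl

private lemma stmt17_closure_vanish {G H : Type*} [AddGroup G] [AddGroup H]
    {gens : Set G} (hgen : AddSubgroup.closure gens = ⊤) (φ : G → H)
    (hadd : ∀ a b, φ (a + b) = φ a + φ b) (hg : ∀ g ∈ gens, φ g = 0) (g : G) :
    φ g = 0 := by
  have hle : AddSubgroup.closure gens ≤ (AddMonoidHom.mk' φ hadd).ker :=
    (AddSubgroup.closure_le _).mpr fun x hx => hg x hx
  rw [hgen] at hle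
  exact hle (AddSubgroup.mem_top g)

private lemma stmt17_A1
    (hWV : AddSubgroup.closure {x : S | ∃ (w : W) (v : V), x = M.mulWV w v} = ⊤)
    {v : V} (h : ∀ w, M.mulVW v w = 0) : v = 0 := by
  have h0 := stmt17_closure_vanish hWV (M.smulVS v) (M.add_smulVS v)
    (by rintro x ⟨w, v', rfl⟩; rw [← M.assocVWV, h, M.zero_smulRV]) 1
  rwa [M.one_smulVS] at h0

private lemma stmt17_A2
    (hWV : AddSubgroup.closure {x : S | ∃ (w : W) (v : V), x = M.mulWV w v} = ⊤)
    {w : W} (h : ∀ v, M.mulVW v w = 0) : w = 0 := by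
  have h0 := stmt17_closure_vanish hWV (fun s => M.smulSW s w)
    (fun a b => M.add_smulSW a b w)
    (by rintro x ⟨w', v, rfl⟩; show M.smulSW (M.mulWV w' v) w = 0
        rw [M.assocWVW, h, M.smulWR_zero]) 1
  rwa [M.one_smulSW] at h0

private lemma stmt17_A3
    (hVW : AddSubgroup.closure {x : R | ∃ (v : V) (w : W), x = M.mulVW v w} = ⊤)
    {w : W} (h : ∀ v, M.mulWV w v = 0) : w = 0 := by
  have h0 := stmt17_closure_vanish hVW (M.smulWR w) (M.add_smulWR w)
    (by rintro x ⟨v, w', rfl⟩; rw [← M.assocWVW, h, M.zero_smulSW]) 1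
  rwa [M.one_smulWR] at h0

private lemma stmt17_A4
    (hVW : AddSubgroup.closure {x : R | ∃ (v : V) (w : W), x = M.mulVW v w} = ⊤)
    {v : V} (h : ∀ w, M.mulWV w v = 0) : v = 0 := by
  have h0 := stmt17_closure_vanish hVW (fun r => M.smulRV r v)
    (fun a b => M.add_smulRV a b v)
    (by rintro x ⟨v', w, rfl⟩; show M.smulRV (M.mulVW v' w) v = 0
        rw [M.assocVWV, h, M.smulVS_zero]) 1
  rwa [M.one_smulRV] at h0

private lemma stmt17_A5
    (hWV : AddSubgroup.closure {x : S | ∃ (w : W) (v : V), x = M.mulWV w v} = ⊤)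
    {s : S} (h : ∀ v, M.smulVS v s = 0) : s = 0 := by
  have h0 := stmt17_closure_vanish hWV (fun t => t * s)
    (fun a b => add_mul a b s)
    (by rintro x ⟨w, v, rfl⟩; show M.mulWV w v * s = 0
        rw [← M.mulWV_smulVS, h, M.mulWV_zero]) 1
  rwa [one_mul] at h0

private lemma stmt17_A6
    (hVW : AddSubgroup.closure {x : R | ∃ (v : V) (w : W), x = M.mulVW v w} = ⊤)
    {r : R} (h : ∀ v, M.smulRV r v = 0) : r = 0 := by
  have h0 := stmt17_closure_vanish hVW (fun t => r * t)
    (fun a b => mul_add r a b)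
    (by rintro x ⟨v, w, rfl⟩; show r * M.mulVW v w = 0
        rw [← M.mulVW_smulR, h, M.zero_mulVW]) 1
  rwa [mul_one] at h0

private lemma stmt17_mul11 (a b : M.Mat) :
    (a * b).1.1 = a.1.1 * b.1.1 + M.mulVW a.1.2 b.2.1 := rfl

private lemma stmt17_mul12 (a b : M.Mat) :
    (a * b).1.2 = M.smulRV a.1.1 b.1.2 + M.smulVS a.1.2 b.2.2 := rfl

private lemma stmt17_mul21 (a b : M.Mat) :
    (a * b).2.1 = M.smulWR a.2.1 b.1.1 + M.smulSW a.2.2 b.2.1 := rfl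

private lemma stmt17_mul22 (a b : M.Mat) :
    (a * b).2.2 = M.mulWV a.2.1 b.1.2 + a.2.2 * b.2.2 := rfl

private lemma stmt17_ece (c : M.Mat) :
    M.mat 1 0 0 0 * c * M.mat 1 0 0 0 = M.mat c.1.1 0 0 0 := by
  refine M.mat_ext ?_ ?_ ?_ ?_ <;>
    simp [stmt17_mul11, stmt17_mul12, stmt17_mul21, stmt17_mul22,
      stmt17_mat11, stmt17_mat12, stmt17_mat21, stmt17_mat22,
      M.zero_mulVW, M.mulVW_zero, M.zero_mulWV, M.mulWV_zero,
      M.one_smulRV, M.zero_smulRV, M.zero_smulVS, M.zero_smulWR, M.zero_smulSW,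
      M.smulRV_zero, M.smulVS_zero, M.smulWR_zero, M.smulSW_zero,
      M.one_smulVS, M.one_smulSW, M.one_smulWR]

private lemma stmt17_ecf (c : M.Mat) :
    M.mat 0 0 0 1 * c * M.mat 0 0 0 1 = M.mat 0 0 0 c.2.2 := by
  refine M.mat_ext ?_ ?_ ?_ ?_ <;>
    simp [stmt17_mul11, stmt17_mul12, stmt17_mul21, stmt17_mul22,
      stmt17_mat11, stmt17_mat12, stmt17_mat21, stmt17_mat22,
      M.zero_mulVW, M.mulVW_zero, M.zero_mulWV, M.mulWV_zero,
      M.one_smulRV, M.zero_smulRV, M.zero_smulVS, M.zero_smulWR, M.zero_smulSW,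
      M.smulRV_zero, M.smulVS_zero, M.smulWR_zero, M.smulSW_zero,
      M.one_smulVS, M.one_smulSW, M.one_smulWR]

private lemma stmt17_cornerR (r r' : R) :
    M.mat r 0 0 0 * M.mat r' 0 0 0 = M.mat (r * r') (0 : V) (0 : W) (0 : S) := by
  refine M.mat_ext ?_ ?_ ?_ ?_ <;>
    simp [stmt17_mul11, stmt17_mul12, stmt17_mul21, stmt17_mul22,
      stmt17_mat11, stmt17_mat12, stmt17_mat21, stmt17_mat22,
      M.zero_mulVW, M.mulVW_zero, M.zero_mulWV, M.mulWV_zero,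
      M.zero_smulRV, M.zero_smulVS, M.zero_smulWR, M.zero_smulSW,
      M.smulRV_zero, M.smulVS_zero, M.smulWR_zero, M.smulSW_zero]

private lemma stmt17_cornerS (s s' : S) :
    M.mat (0 : R) (0 : V) (0 : W) s * M.mat 0 0 0 s' = M.mat 0 0 0 (s * s') := by
  refine M.mat_ext ?_ ?_ ?_ ?_ <;>
    simp [stmt17_mul11, stmt17_mul12, stmt17_mul21, stmt17_mul22,
      stmt17_mat11, stmt17_mat12, stmt17_mat21, stmt17_mat22,
      M.zero_mulVW, M.mulVW_zero, M.zero_mulWV, M.mulWV_zero,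
      M.zero_smulRV, M.zero_smulVS, M.zero_smulWR, M.zero_smulSW,
      M.smulRV_zero, M.smulVS_zero, M.smulWR_zero, M.smulSW_zero]

private lemma stmt17_corner11
    (hVW : AddSubgroup.closure {x : R | ∃ (v : V) (w : W), x = M.mulVW v w} = ⊤)
    (hWV : AddSubgroup.closure {x : S | ∃ (w : W) (v : V), x = M.mulWV w v} = ⊤)
    {c : M.Mat} (h : ∀ x y : M.Mat, (x * c * y).1.1 = 0) : c = 0 := by
  have h11 : c.1.1 = 0 := by have := h 1 1; rwa [one_mul, mul_one] at this
  have h12 : c.1.2 = 0 := by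
    refine stmt17_A1 hWV fun w => ?_
    have := h 1 (M.mat 0 0 w 0)
    rw [one_mul] at this
    simpa [stmt17_mul11, stmt17_mat11, stmt17_mat21] using this
  have h21 : c.2.1 = 0 := by
    refine stmt17_A2 hWV fun v => ?_
    have := h (M.mat 0 v 0 0) 1
    rw [mul_one] at this
    simpa [stmt17_mul11, stmt17_mat11, stmt17_mat12] using this
  have h22 : c.2.2 = 0 := by
    refine stmt17_A5 hWV fun v => ?_
    refine stmt17_A1 hWV fun w => ?_
    have := h (M.mat 0 v 0 0) (M.mat 0 0 w 0)
    simpa [stmt17_mul11, stmt17_mul12, stmt17_mat11, stmt17_mat12,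
      stmt17_mat21, M.zero_smulRV, M.zero_mulVW] using this
  exact M.mat_ext h11 h12 h21 h22

private lemma stmt17_corner22
    (hVW : AddSubgroup.closure {x : R | ∃ (v : V) (w : W), x = M.mulVW v w} = ⊤)
    (hWV : AddSubgroup.closure {x : S | ∃ (w : W) (v : V), x = M.mulWV w v} = ⊤)
    {c : M.Mat} (h : ∀ x y : M.Mat, (x * c * y).2.2 = 0) : c = 0 := by
  have h22 : c.2.2 = 0 := by have := h 1 1; rwa [one_mul, mul_one] at this
  have h21 : c.2.1 = 0 := by
    refine stmt17_A3 hVW fun v => ?_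
    have := h 1 (M.mat 0 v 0 0)
    rw [one_mul] at this
    simpa [stmt17_mul22, stmt17_mat12, stmt17_mat22] using this
  have h12 : c.1.2 = 0 := by
    refine stmt17_A4 hVW fun w => ?_
    have := h (M.mat 0 0 w 0) 1
    rw [mul_one] at this
    simpa [stmt17_mul22, stmt17_mat21, stmt17_mat22] using this
  have h11 : c.1.1 = 0 := by
    refine stmt17_A6 hVW fun v => ?_
    refine stmt17_A4 hVW fun w => ?_
    have := h (M.mat 0 0 w 0) (M.mat 0 v 0 0)
    simpa [stmt17_mul22, stmt17_mul21, stmt17_mat12, stmt17_mat21,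
      stmt17_mat22, M.zero_smulSW, M.zero_mulWV, M.mulWV_smulR] using this
  exact M.mat_ext h11 h12 h21 h22

private lemma stmt17_sand11 {a b : M.Mat} (hab : ∀ t : M.Mat, a * t * b = 0)
    (x y u v : M.Mat) (r : R) : (x * a * y).1.1 * r * (u * b * v).1.1 = 0 := by
  have key : (M.mat 1 0 0 0 * (x * a * y) * M.mat 1 0 0 0) * M.mat r 0 0 0 *
      (M.mat 1 0 0 0 * (u * b * v) * M.mat 1 0 0 0) = 0 := by
    have e1 : (M.mat 1 0 0 0 * (x * a * y) * M.mat 1 0 0 0) * M.mat r 0 0 0 *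
        (M.mat 1 0 0 0 * (u * b * v) * M.mat 1 0 0 0)
        = (M.mat 1 0 0 0 * x) *
          (a * (y * M.mat 1 0 0 0 * M.mat r 0 0 0 * M.mat 1 0 0 0 * u) * b) *
          (v * M.mat 1 0 0 0) := by
      simp only [mul_assoc]
    rw [e1, hab, mul_zero, zero_mul]
  rw [stmt17_ece, stmt17_ece, stmt17_cornerR, stmt17_cornerR] at key
  exact congrArg (fun t : M.Mat => t.1.1) key

private lemma stmt17_sand22 {a b : M.Mat} (hab : ∀ t : M.Mat, a * t * b = 0)
    (x y u v : M.Mat) (s : S) : (x * a * y).2.2 * s * (u * b * v).2.2 = 0 := by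
  have key : (M.mat 0 0 0 1 * (x * a * y) * M.mat 0 0 0 1) * M.mat 0 0 0 s *
      (M.mat 0 0 0 1 * (u * b * v) * M.mat 0 0 0 1) = 0 := by
    have e1 : (M.mat 0 0 0 1 * (x * a * y) * M.mat 0 0 0 1) * M.mat 0 0 0 s *
        (M.mat 0 0 0 1 * (u * b * v) * M.mat 0 0 0 1)
        = (M.mat 0 0 0 1 * x) *
          (a * (y * M.mat 0 0 0 1 * M.mat 0 0 0 s * M.mat 0 0 0 1 * u) * b) *
          (v * M.mat 0 0 0 1) := by
      simp only [mul_assoc]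
    rw [e1, hab, mul_zero, zero_mul]
  rw [stmt17_ecf, stmt17_ecf, stmt17_cornerS, stmt17_cornerS] at key
  exact congrArg (fun t : M.Mat => t.2.2) key

end Stmt17Aux

/-- Theorem 2.13, (4) ⇒ (1): if `VW = R`, `WV = S` and `R` or `S` is a prime
ring, then the Morita context ring is prime. -/
theorem stmt17 (M : MoritaContext R S V W)
    (hVW : AddSubgroup.closure {x : R | ∃ (v : V) (w : W), x = M.mulVW v w} = ⊤)
    (hWV : AddSubgroup.closure {x : S | ∃ (w : W) (v : V), x = M.mulWV w v} = ⊤)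
    (h : IsPrimeRing R ∨ IsPrimeRing S) :
    IsPrimeRing M.Mat := by
  intro a b hab
  rcases h with hR | hS
  · by_cases ha : ∀ x y : M.Mat, (x * a * y).1.1 = 0
    · exact Or.inl (stmt17_corner11 hVW hWV ha)
    · push_neg at ha
      obtain ⟨x, y, hxy⟩ := ha
      refine Or.inr (stmt17_corner11 hVW hWV fun u v => ?_)
      rcases hR (x * a * y).1.1 (u * b * v).1.1 (fun r => stmt17_sand11 hab x y u v r)
        with h' | h'
      · exact absurd h' hxy
      · exact h'
  · by_cases ha : ∀ x y : M.Mat, (x * a * y).2.2 = 0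
    · exact Or.inl (stmt17_corner22 hVW hWV ha)
    · push_neg at ha
      obtain ⟨x, y, hxy⟩ := ha
      refine Or.inr (stmt17_corner22 hVW hWV fun u v => ?_)
      rcases hS (x * a * y).2.2 (u * b * v).2.2 (fun s => stmt17_sand22 hab x y u v s)
        with h' | h'
      · exact absurd h' hxy
      · exact h'
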